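/- arXiv:1302.2256 — 9 statements merged into one kernel-verified Lean document; each statement's English description precedes it below -/
import Mathlib

section
/- Let k ≥ 1 and let φ : ℕ → ℕ satisfy the finite Ramsey arrow condition w → (φ(w))¹_{k+1} for all w (i.e., for every set X of size w and every coloring of X with k+1 colors there is a monochromatic subset of size φ(w)). Then for every m there exists w > m such that w - m → (φ(w))¹_k, i.e., every coloring of any (w-m)-element set with k colors has a monochromatic subset of size φ(w). -/
/-- Finite Ramsey arrow for singletons: `a → (b)¹_c`. Every `c`-coloring of any
`a`-element set of naturals has a monochromatic subset of size `b`. -/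
def Arrow1 (a b c : ℕ) : Prop :=
  ∀ X : Finset ℕ, X.card = a → ∀ f : ℕ → Fin c,
    ∃ Y ⊆ X, Y.card = b ∧ ∃ i : Fin c, ∀ y ∈ Y, f y = i

theorem stmt0 (k : ℕ) (hk : 1 ≤ k) (φ : ℕ → ℕ)
    (hφ : ∀ w, Arrow1 w (φ w) (k + 1)) :
    ∀ m : ℕ, ∃ w > m, Arrow1 (w - m) (φ w) k := by
  intro m
  have hkm : (k + 1) * m = k * m + m := by ring
  refine ⟨(k + 1) * m + 1, by omega, ?_⟩
  intro X hX f
  have hXcard : X.card = k * m + 1 := by omega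
  obtain ⟨X', hXX', hX'⟩ := Infinite.exists_superset_card_eq X ((k + 1) * m + 1)
    (show X.card ≤ (k + 1) * m + 1 by omega)
  set g : ℕ → Fin (k + 1) := fun x => if x ∈ X then (f x).castSucc else Fin.last k with hg
  obtain ⟨Y, hYX', hYcard, i, hY⟩ := hφ _ X' hX' g
  rcases Fin.eq_castSucc_or_eq_last i with ⟨j, rfl⟩ | rfl
  · refine ⟨Y, ?_, hYcard, j, ?_⟩
    · intro y hy
      by_contra hyX
      have h := hY y hy
      simp only [hg, if_neg hyX] at h
      exact absurd h.symm (Fin.castSucc_lt_last j).ne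
    · intro y hy
      have hyX : y ∈ X := by
        by_contra hyX
        have h := hY y hy
        simp only [hg, if_neg hyX] at h
        exact absurd h.symm (Fin.castSucc_lt_last j).ne
      have h := hY y hy
      simp only [hg, if_pos hyX] at h
      exact Fin.castSucc_injective _ h
  · have hdisj : ∀ y ∈ Y, y ∉ X := by
      intro y hy hyX
      have h := hY y hy
      simp only [hg, if_pos hyX] at h
      exact absurd h (Fin.castSucc_lt_last (f y)).ne
    have hsub : Y ⊆ X' \ X := fun y hy => Finset.mem_sdiff.mpr ⟨hYX' hy, hdisj y hy⟩
    have hcd : (X' \ X).card = m := by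
      rw [Finset.card_sdiff_of_subset hXX', hX', hXcard]; omega
    have hYle : φ ((k + 1) * m + 1) ≤ m := by
      have := Finset.card_le_card hsub
      omega
    obtain ⟨j, _, hj⟩ := Finset.exists_lt_card_fiber_of_mul_lt_card_of_maps_to
      (t := (Finset.univ : Finset (Fin k))) (f := f)
      (fun x (_ : x ∈ X) => Finset.mem_univ _)
      (show Finset.univ.card * m < X.card by simp [hXcard])
    obtain ⟨Y', hY'sub, hY'card⟩ := Finset.exists_subset_card_eq
      (show φ ((k + 1) * m + 1) ≤ (X.filter fun x => f x = j).card by omega)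
    refine ⟨Y', fun y hy => (Finset.mem_filter.mp (hY'sub hy)).1, hY'card, j,
      fun y hy => (Finset.mem_filter.mp (hY'sub hy)).2⟩
end

section
/- Let k ≥ 1, let φ : ℕ → ℕ satisfy w → (φ(w))¹_{k+1} for all w with liminf_w φ(w) = ∞, and let f : ℕ → Fin k be any coloring of singletons. Then there exists a set A ⊆ ℕ that is homogeneous for f (f is constant on A) and packed for φ, i.e., |A ∩ {1,…,w}| ≥ φ(w) for infinitely many w. -/
open Filter

/-- `A` is packed for `φ`: `|A ∩ {1,…,w}| ≥ φ(w)` for infinitely many `w`. -/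
def Packed (φ : ℕ → ℕ) (A : Set ℕ) : Prop :=
  ∀ m : ℕ, ∃ w ≥ m, φ w ≤ (A ∩ Set.Icc 1 w).ncard

theorem stmt1 (k : ℕ) (hk : 1 ≤ k) (φ : ℕ → ℕ)
    (hφ : ∀ w, Arrow1 w (φ w) (k + 1))
    (hlim : Tendsto φ atTop atTop)
    (f : ℕ → Fin k) :
    ∃ A : Set ℕ, (∃ c : Fin k, ∀ a ∈ A, f a = c) ∧ Packed φ A := by
  by_contra h
  push_neg at h
  -- For each color c, the set f⁻¹{c} is homogeneous, so it cannot be packed.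
  have hc : ∀ c : Fin k, ∃ m : ℕ, ∀ w ≥ m, ((f ⁻¹' {c}) ∩ Set.Icc 1 w).ncard < φ w := by
    intro c
    have := h (f ⁻¹' {c}) ⟨c, fun a ha => ha⟩
    unfold Packed at this
    push_neg at this
    exact this
  choose m hm using hc
  set M : ℕ := Finset.univ.sup m with hM
  -- pick w ≥ M with φ w ≥ 1
  obtain ⟨N, hN⟩ := (hlim.eventually_ge_atTop 1).exists_forall_of_atTop
  set w := max M N with hw
  have hφw : 1 ≤ φ w := hN w (le_max_right _ _)
  -- apply the arrow at w with the coloring castSucc ∘ f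
  obtain ⟨Y, hYX, hYcard, i, hi⟩ :=
    hφ w (Finset.Icc 1 w) (by simp [Nat.card_Icc]) (fun n => Fin.castSucc (f n))
  have hYne : Y.Nonempty := by
    rw [← Finset.card_pos, hYcard]; exact hφw
  obtain ⟨y₀, hy₀⟩ := hYne
  set c := f y₀ with hcdef
  have hicast : i = Fin.castSucc c := (hi y₀ hy₀).symm
  have hYsub : (Y : Set ℕ) ⊆ (f ⁻¹' {c}) ∩ Set.Icc 1 w := by
    intro y hy
    constructor
    · have := hi y hy
      rw [hicast] at this
      exact Fin.castSucc_injective k this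
    · have := hYX hy
      simpa using this
  have hfin : ((f ⁻¹' {c}) ∩ Set.Icc 1 w).Finite :=
    (Set.finite_Icc 1 w).subset (Set.inter_subset_right)
  have hcard : φ w ≤ ((f ⁻¹' {c}) ∩ Set.Icc 1 w).ncard := by
    calc φ w = Y.card := hYcard.symm
    _ = (Y : Set ℕ).ncard := (Set.ncard_coe_finset Y).symm
    _ ≤ _ := Set.ncard_le_ncard hYsub hfin
  have : ((f ⁻¹' {c}) ∩ Set.Icc 1 w).ncard < φ w :=
    hm c w (le_trans (Finset.le_sup (Finset.mem_univ c)) (le_max_left _ _))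
  omega
end

section
/- Fix n ≥ 1 and φ : ℕ → ℕ with liminf_w φ(w) = ∞. Then there exists a coloring g : [ℕ]ⁿ → Fin(2^{n-1}) such that for every infinite set A ⊆ ℕ, either A is sparse for φ (not packed), or g assigns all 2^{n-1} colors to n-element subsets of A, i.e., {g(Z) : Z ∈ [A]ⁿ} has cardinality 2^{n-1}. -/
open Filter

set_option maxHeartbeats 1000000 in
theorem stmt2 (n : ℕ) (hn : 1 ≤ n) (φ : ℕ → ℕ)
    (hlim : Tendsto φ atTop atTop) :
    ∃ g : Finset ℕ → Fin (2 ^ (n - 1)),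
      ∀ A : Set ℕ, A.Infinite →
        (¬ Packed φ A) ∨
        Set.ncard {c : Fin (2 ^ (n - 1)) |
          ∃ Z : Finset ℕ, ↑Z ⊆ A ∧ Z.card = n ∧ g Z = c} = 2 ^ (n - 1) := by
  classical
  have hMex : ∀ c : ℕ, ∃ m, ∀ v ≥ m, c ≤ φ v := fun c =>
    eventually_atTop.1 (hlim.eventually_ge_atTop c)
  choose M hMspec using hMex
  set F : ℕ → ℕ := fun x => max (x + 1) (M (x + 2 * n)) with hFdef
  set w : ℕ → ℕ := fun i => F^[i] 0 with hwdef
  have hwsucc : ∀ i, w (i + 1) = F (w i) := fun i => Function.iterate_succ_apply' F i 0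
  have hwlt : ∀ i, w i < w (i + 1) := by
    intro i; rw [hwsucc]
    exact lt_of_lt_of_le (Nat.lt_succ_self _) (le_max_left _ _)
  have hwmono : StrictMono w := strictMono_nat_of_lt_succ hwlt
  have hφw : ∀ i v, w (i + 1) ≤ v → w i + 2 * n ≤ φ v := by
    intro i v hv
    refine hMspec _ v (le_trans ?_ hv)
    rw [hwsucc]
    exact le_max_right _ _
  have hwge : ∀ i, i ≤ w i := by
    intro i; induction i with
    | zero => exact Nat.zero_le _
    | succ k ih => exact Nat.succ_le_of_lt (lt_of_le_of_lt ih (hwlt k))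
  have hexists : ∀ m : ℕ, ∃ i, m ≤ w (i + 1) :=
    fun m => ⟨m, le_trans (hwge m) (hwmono.monotone (Nat.le_succ m))⟩
  set idx : ℕ → ℕ := fun a => Nat.find (hexists a) with hidxdef
  have hidx : ∀ a j, w j < a → a ≤ w (j + 1) → idx a = j := by
    intro a j h1 h2
    refine (Nat.find_eq_iff (hexists a)).2 ⟨h2, ?_⟩
    intro k hk hle
    exact absurd hle (not_le.2 (lt_of_le_of_lt (hwmono.monotone (Nat.succ_le.2 hk)) h1))
  have hpow : 0 < 2 ^ (n - 1) := Nat.pow_pos (by norm_num)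
  set enc : (Fin (n - 1) → Fin 2) ≃ Fin (2 ^ (n - 1)) := finFunctionFinEquiv with hencdef
  set g : Finset ℕ → Fin (2 ^ (n - 1)) := fun Z =>
    if h : Z.card = n then
      enc (fun k =>
        if idx (Z.orderEmbOfFin h ⟨k.1, by have := k.2; omega⟩) <
            idx (Z.orderEmbOfFin h ⟨k.1 + 1, by have := k.2; omega⟩) then 1 else 0)
    else ⟨0, hpow⟩ with hgdef
  refine ⟨g, ?_⟩
  intro A hAinf
  by_cases hpA : Packed φ A
  swap
  · exact Or.inl hpA
  refine Or.inr ?_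
  -- infinitely many "fat" intervals
  have fat : ∀ m : ℕ, ∃ j, m ≤ j ∧ n ≤ (A ∩ Set.Ioc (w j) (w (j + 1))).ncard := by
    intro m
    obtain ⟨v, hv1, hv2⟩ := hpA (w (m + 2) + 1)
    set j := idx v with hj
    have hjspec : v ≤ w (j + 1) := Nat.find_spec (hexists v)
    have hjge : m + 2 ≤ j := by
      by_contra h
      push_neg at h
      have : w (j + 1) ≤ w (m + 2) := hwmono.monotone (by omega)
      omega
    have hwjv : w j < v := by
      have h1 := Nat.find_min (hexists v) (show j - 1 < j by omega)
      have hj1 : j - 1 + 1 = j := by omega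
      rw [hj1] at h1
      omega
    have hφv : w (j - 1) + 2 * n ≤ φ v := by
      refine hφw (j - 1) v ?_
      have : j - 1 + 1 = j := by omega
      rw [this]; omega
    have hsub : A ∩ Set.Icc 1 v ⊆ (Set.Icc 1 (w (j - 1)) ∪
        (A ∩ Set.Ioc (w (j - 1)) (w j))) ∪ (A ∩ Set.Ioc (w j) (w (j + 1))) := by
      intro x hx
      simp only [Set.mem_inter_iff, Set.mem_Icc, Set.mem_Ioc, Set.mem_union] at hx ⊢
      obtain ⟨hxA, hx1, hxv⟩ := hx
      by_cases h1 : x ≤ w (j - 1)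
      · exact Or.inl (Or.inl ⟨hx1, h1⟩)
      by_cases h2 : x ≤ w j
      · exact Or.inl (Or.inr ⟨hxA, by omega, h2⟩)
      · exact Or.inr ⟨hxA, by omega, by omega⟩
    have hIccfin : ∀ a b : ℕ, (Set.Icc a b).Finite := fun a b => Set.finite_Icc a b
    have hfinU : ((Set.Icc 1 (w (j - 1)) ∪
        (A ∩ Set.Ioc (w (j - 1)) (w j))) ∪ (A ∩ Set.Ioc (w j) (w (j + 1)))).Finite := by
      refine Set.Finite.union (Set.Finite.union (hIccfin _ _) ?_) ?_
      · exact (Set.finite_Ioc _ _).inter_of_right A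
      · exact (Set.finite_Ioc _ _).inter_of_right A
    have hchain : (A ∩ Set.Icc 1 v).ncard ≤ (Set.Icc 1 (w (j - 1))).ncard
        + (A ∩ Set.Ioc (w (j - 1)) (w j)).ncard + (A ∩ Set.Ioc (w j) (w (j + 1))).ncard := by
      calc (A ∩ Set.Icc 1 v).ncard
          ≤ ((Set.Icc 1 (w (j - 1)) ∪ (A ∩ Set.Ioc (w (j - 1)) (w j)))
              ∪ (A ∩ Set.Ioc (w j) (w (j + 1)))).ncard :=
            Set.ncard_le_ncard hsub hfinU
        _ ≤ (Set.Icc 1 (w (j - 1)) ∪ (A ∩ Set.Ioc (w (j - 1)) (w j))).ncard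
              + (A ∩ Set.Ioc (w j) (w (j + 1))).ncard := Set.ncard_union_le _ _
        _ ≤ _ := by
            have := Set.ncard_union_le (Set.Icc 1 (w (j - 1))) (A ∩ Set.Ioc (w (j - 1)) (w j))
            omega
    have hIcc : (Set.Icc 1 (w (j - 1))).ncard = w (j - 1) := by
      rw [← Finset.coe_Icc, Set.ncard_coe_finset, Nat.card_Icc]
      omega
    have key : w (j - 1) + 2 * n ≤ (A ∩ Set.Icc 1 v).ncard := le_trans hφv hv2
    rw [hIcc] at hchain
    by_cases hcase : n ≤ (A ∩ Set.Ioc (w (j - 1)) (w j)).ncard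
    · refine ⟨j - 1, by omega, ?_⟩
      have : j - 1 + 1 = j := by omega
      rw [this]
      exact hcase
    · exact ⟨j, by omega, by omega⟩
  choose Jf hJf1 hJf2 using fat
  set J : ℕ → ℕ := fun t => Nat.rec (Jf 0) (fun _ prev => Jf (prev + 1)) t with hJdef
  have hJsucc : ∀ t, J (t + 1) = Jf (J t + 1) := fun t => rfl
  have hJmono : StrictMono J := by
    refine strictMono_nat_of_lt_succ fun t => ?_
    rw [hJsucc]
    have := hJf1 (J t + 1)
    omega
  have hJfat : ∀ t, n ≤ (A ∩ Set.Ioc (w (J t)) (w (J t + 1))).ncard := by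
    intro t
    cases t with
    | zero => exact hJf2 0
    | succ s => exact hJf2 (J s + 1)
  have hTex : ∀ t, ∃ T : Finset ℕ,
      (↑T : Set ℕ) ⊆ A ∩ Set.Ioc (w (J t)) (w (J t + 1)) ∧ T.card = n := by
    intro t
    have hfin : (A ∩ Set.Ioc (w (J t)) (w (J t + 1))).Finite :=
      (Set.finite_Ioc _ _).inter_of_right A
    have hcard : n ≤ hfin.toFinset.card := by
      rw [← Set.ncard_eq_toFinset_card _ hfin]
      exact hJfat t
    obtain ⟨T, hT1, hT2⟩ := Finset.exists_subset_card_eq hcard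
    exact ⟨T, fun x hx => hfin.mem_toFinset.1 (hT1 hx), hT2⟩
  choose T hTsub hTcard using hTex
  have hall : ∀ c : Fin (2 ^ (n - 1)),
      ∃ Z : Finset ℕ, ↑Z ⊆ A ∧ Z.card = n ∧ g Z = c := by
    intro c
    set bits : Fin (n - 1) → Fin 2 := enc.symm c with hbitsdef
    set bval : ℕ → ℕ := fun k => if h : k < n - 1 then (bits ⟨k, h⟩ : ℕ) else 0 with hbvaldef
    set β : ℕ → ℕ := fun k => ∑ k' ∈ Finset.range k, bval k' with hβdef
    have hβsucc : ∀ k, β (k + 1) = β k + bval k := fun k => Finset.sum_range_succ _ _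
    have hβmono : Monotone β := monotone_nat_of_le_succ fun k => by rw [hβsucc]; omega
    set a : Fin n → ℕ := fun k => (T (β k.1)).orderEmbOfFin (hTcard (β k.1)) k with hadef
    have haMem : ∀ k : Fin n, a k ∈ A ∩ Set.Ioc (w (J (β k.1))) (w (J (β k.1) + 1)) :=
      fun k => hTsub _ (Finset.orderEmbOfFin_mem _ _ _)
    have haA : ∀ k, a k ∈ A := fun k => (haMem k).1
    have haIoc : ∀ k : Fin n, w (J (β k.1)) < a k ∧ a k ≤ w (J (β k.1) + 1) :=
      fun k => (haMem k).2
    have haidx : ∀ k : Fin n, idx (a k) = J (β k.1) :=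
      fun k => hidx _ _ (haIoc k).1 (haIoc k).2
    have hamono : StrictMono a := by
      intro k k' hkk
      rcases lt_or_eq_of_le (hβmono (le_of_lt hkk)) with hb | hb
      · have hJle : J (β k.1) + 1 ≤ J (β k'.1) := Nat.succ_le_of_lt (hJmono hb)
        calc a k ≤ w (J (β k.1) + 1) := (haIoc k).2
          _ ≤ w (J (β k'.1)) := hwmono.monotone hJle
          _ < a k' := (haIoc k').1
      · show a k < a k'
        rw [hadef]
        simp only
        rw [show β (k'.1) = β (k.1) from hb.symm]
        exact ((T (β k.1)).orderEmbOfFin (hTcard (β k.1))).strictMono hkk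
    set Z : Finset ℕ := Finset.image a Finset.univ with hZdef
    have hZcard : Z.card = n := by
      rw [hZdef, Finset.card_image_of_injective _ hamono.injective, Finset.card_univ,
        Fintype.card_fin]
    have hZA : (↑Z : Set ℕ) ⊆ A := by
      intro x hx
      simp only [hZdef, Finset.coe_image, Finset.coe_univ, Set.image_univ,
        Set.mem_range] at hx
      obtain ⟨k, rfl⟩ := hx
      exact haA k
    have hembeq : (OrderEmbedding.ofStrictMono a hamono : Fin n ↪o ℕ)
        = Z.orderEmbOfFin hZcard := by
      refine Finset.orderEmbOfFin_unique' hZcard fun x => ?_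
      simp only [hZdef, Finset.mem_image]
      exact ⟨x, Finset.mem_univ x, rfl⟩
    have hemb : ∀ i : Fin n, Z.orderEmbOfFin hZcard i = a i := by
      intro i
      rw [← hembeq]
      rfl
    refine ⟨Z, hZA, hZcard, ?_⟩
    rw [hgdef]
    simp only
    rw [dif_pos hZcard]
    refine Eq.trans (congrArg enc ?_) (enc.apply_symm_apply c)
    funext k
    have hk2 : k.1 < n - 1 := k.2
    simp only [hemb, haidx]
    have hbvk : bval k.1 = (bits k : ℕ) := by
      show (if h : k.1 < n - 1 then ((bits ⟨k.1, h⟩ : Fin 2) : ℕ) else 0) = _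
      rw [dif_pos hk2]
    rw [hβsucc k.1, hbvk]
    have hbk : (bits k : ℕ) = 0 ∨ (bits k : ℕ) = 1 := by
      have := (bits k).isLt
      omega
    rcases hbk with h0 | h1
    · rw [h0]
      rw [if_neg (by simp)]
      exact (Fin.ext h0.symm : (0 : Fin 2) = bits k)
    · rw [h1]
      rw [if_pos (hJmono (Nat.lt_succ_self _))]
      exact (Fin.ext h1.symm : (1 : Fin 2) = bits k)
  have huniv : {c : Fin (2 ^ (n - 1)) |
      ∃ Z : Finset ℕ, ↑Z ⊆ A ∧ Z.card = n ∧ g Z = c} = Set.univ :=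
    Set.eq_univ_of_forall hall
  rw [huniv, Set.ncard_univ, Nat.card_eq_fintype_card, Fintype.card_fin]
end

section
/- Fix k ≥ 1 and a coloring f : [ℕ]² → Fin k together with φ : ℕ → ℕ satisfying w → (φ(w))²_{k+1} for all w. Then the full set ℕ is large, where L ⊆ ℕ is called large if for all m and p there exists w such that for every ρ : {1,…,w} → Fin p, there exists Y ⊆ (m,w] ∩ L with |Y| ≥ φ(w), Y homogeneous for f (f constant on [Y]²), and Y homogeneous for ρ (ρ constant on Y). -/
/-- Finite Ramsey arrow for `n`-element subsets: `a → (b)ⁿ_c`. -/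
def ArrowN (n a b c : ℕ) : Prop :=
  ∀ X : Finset ℕ, X.card = a → ∀ f : Finset ℕ → Fin c,
    ∃ Y ⊆ X, Y.card = b ∧ ∃ i : Fin c, ∀ Z ⊆ Y, Z.card = n → f Z = i

/-- Largeness of `L ⊆ ℕ` relative to the instance `f, φ` of packed Ramsey's
theorem for pairs: for all `m, p` there is `w` such that for every
`ρ : {1,…,w} → Fin p` there is `Y ⊆ (m,w] ∩ L` with `|Y| ≥ φ w`,
`f` constant on `[Y]²`, and `ρ` constant on `Y`. -/
def Large2 (k : ℕ) (f : Finset ℕ → Fin k) (φ : ℕ → ℕ) (L : Set ℕ) : Prop :=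
  ∀ m p : ℕ, ∃ w : ℕ, ∀ ρ : ℕ → Fin p,
    ∃ Y : Finset ℕ, ↑Y ⊆ Set.Ioc m w ∩ L ∧ φ w ≤ Y.card ∧
      (∃ c : Fin k, ∀ Z ⊆ Y, Z.card = 2 → f Z = c) ∧
      (∃ i : Fin p, ∀ y ∈ Y, ρ y = i)

theorem stmt4 (k : ℕ) (hk : 1 ≤ k) (f : Finset ℕ → Fin k) (φ : ℕ → ℕ)
    (hφ : ∀ w, ArrowN 2 w (φ w) (k + 1)) :
    Large2 k f φ Set.univ := by
  classical
  intro m p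
  rcases Nat.eq_zero_or_pos p with hp | hp
  · subst hp
    exact ⟨0, fun ρ => (ρ 0).elim0⟩
  by_cases hA : ∃ W, m + p + 1 ≤ φ W
  · -- Case A: φ takes a large value somewhere; use the extra color trick.
    obtain ⟨W, hW⟩ := hA
    refine ⟨W, fun ρ => ?_⟩
    set g : Finset ℕ → Fin (k + 1) := fun Z =>
      if Z ⊆ Finset.Ioc m W ∧ ∀ x ∈ Z, ∀ y ∈ Z, ρ x = ρ y
      then (f Z).castSucc else Fin.last k with hg
    obtain ⟨Y, hYX, hYcard, i, hi⟩ := hφ W (Finset.Icc 1 W) (by simp) g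
    have h2 : 2 ≤ Y.card := by omega
    have pair : ∀ x ∈ Y, ∀ y ∈ Y, x ≠ y →
        ({x, y} : Finset ℕ) ⊆ Y ∧ ({x, y} : Finset ℕ).card = 2 := by
      intro x hx y hy hxy
      refine ⟨?_, Finset.card_pair hxy⟩
      intro z hz
      simp only [Finset.mem_insert, Finset.mem_singleton] at hz
      rcases hz with rfl | rfl <;> assumption
    by_cases hlast : i = Fin.last k
    · exfalso
      -- ρ is injective on Y ∩ (m, W], so that part has ≤ p elements;
      -- the rest is in [1, m]. This contradicts |Y| = φ W ≥ m + p + 1.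
      have hc1 : (Y.filter (· ∈ Finset.Ioc m W)).card ≤ p := by
        have := Finset.card_le_card_of_injOn (f := ρ)
          (s := Y.filter (· ∈ Finset.Ioc m W)) (t := Finset.univ)
          (fun a _ => Finset.mem_univ _) ?_
        · simpa using this
        · intro x hx y hy hxy
          by_contra hne
          simp only [Finset.coe_filter, Set.mem_setOf_eq] at hx hy
          obtain ⟨hs, hc⟩ := pair x hx.1 y hy.1 hne
          have hgz := hi _ hs hc
          rw [hg] at hgz
          simp only at hgz
          rw [if_pos ?_] at hgz
          · rw [hlast] at hgz
            exact absurd hgz (Fin.castSucc_lt_last _).ne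
          · constructor
            · intro z hz
              simp only [Finset.mem_insert, Finset.mem_singleton] at hz
              rcases hz with rfl | rfl
              · exact hx.2
              · exact hy.2
            · intro a ha b hb
              simp only [Finset.mem_insert, Finset.mem_singleton] at ha hb
              rcases ha with rfl | rfl <;> rcases hb with rfl | rfl <;>
                first | rfl | exact hxy | exact hxy.symm
      have hc2 : (Y.filter (¬ · ∈ Finset.Ioc m W)).card ≤ m := by
        have hsub : Y.filter (¬ · ∈ Finset.Ioc m W) ⊆ Finset.Icc 1 m := by
          intro y hy
          simp only [Finset.mem_filter] at hy
          have h1 := hYX hy.1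
          simp only [Finset.mem_Icc] at h1 ⊢
          have h2 := hy.2
          simp only [Finset.mem_Ioc] at h2
          omega
        calc (Y.filter (¬ · ∈ Finset.Ioc m W)).card ≤ (Finset.Icc 1 m).card :=
              Finset.card_le_card hsub
          _ = m := by simp
      have := Finset.card_filter_add_card_filter_not
        (s := Y) (p := (· ∈ Finset.Ioc m W))
      omega
    · -- homogeneous color is a real color
      set c : Fin k := i.castPred hlast with hcdef
      have key : ∀ Z ⊆ Y, Z.card = 2 →
          (Z ⊆ Finset.Ioc m W ∧ ∀ x ∈ Z, ∀ y ∈ Z, ρ x = ρ y) ∧ f Z = c := by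
        intro Z hZ hZc
        have hgz := hi Z hZ hZc
        rw [hg] at hgz
        simp only at hgz
        by_cases hcond : Z ⊆ Finset.Ioc m W ∧ ∀ x ∈ Z, ∀ y ∈ Z, ρ x = ρ y
        · rw [if_pos hcond] at hgz
          refine ⟨hcond, ?_⟩
          have : (f Z).castSucc = c.castSucc := by
            rw [hgz, hcdef, Fin.castSucc_castPred]
          exact Fin.castSucc_injective _ this
        · rw [if_neg hcond] at hgz
          exact absurd hgz.symm hlast
      have hYIoc : ∀ y ∈ Y, y ∈ Finset.Ioc m W := by
        intro y hy
        obtain ⟨y', hy', hne⟩ := Finset.exists_mem_ne (s := Y) (by omega) y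
        obtain ⟨hs, hcard⟩ := pair y hy y' hy' (Ne.symm hne)
        exact (key _ hs hcard).1.1 (Finset.mem_insert_self _ _)
      obtain ⟨y₀, hy₀⟩ := Finset.card_pos.mp (by omega : 0 < Y.card)
      refine ⟨Y, ?_, le_of_eq hYcard.symm, ⟨c, fun Z hZ hZc => (key Z hZ hZc).2⟩,
        ⟨ρ y₀, ?_⟩⟩
      · intro y hy
        have := hYIoc y hy
        simp only [Finset.mem_Ioc] at this
        exact ⟨this, Set.mem_univ _⟩
      · intro y hy
        by_cases hne : y = y₀
        · rw [hne]
        · obtain ⟨hs, hcard⟩ := pair y hy y₀ hy₀ hne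
          exact (key _ hs hcard).1.2 y (Finset.mem_insert_self _ _) y₀ (by simp)
  · -- Case B: φ is bounded by m + p; pick a maximizer and use pigeonhole.
    push_neg at hA
    have hbdd : ∀ v, φ v ≤ m + p := fun v => by have := hA v; omega
    have hmax : ∃ w', ∀ v, φ v ≤ φ w' := by
      have h1 : (Set.range φ).Nonempty := ⟨φ 0, 0, rfl⟩
      have h2 : BddAbove (Set.range φ) := ⟨m + p, by rintro _ ⟨v, rfl⟩; exact hbdd v⟩
      obtain ⟨w', hw'⟩ := Nat.sSup_mem h1 h2
      exact ⟨w', fun v => hw' ▸ le_csSup h2 ⟨v, rfl⟩⟩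
    obtain ⟨w', hw'⟩ := hmax
    refine ⟨m + p * w', fun ρ => ?_⟩
    set W := m + p * w' with hWdef
    obtain ⟨i, -, hfib⟩ := Finset.exists_le_card_fiber_of_mul_le_card_of_maps_to
      (s := Finset.Ioc m W) (t := (Finset.univ : Finset (Fin p))) (f := ρ) (n := w')
      (fun a _ => Finset.mem_univ _) ⟨⟨0, hp⟩, Finset.mem_univ _⟩
      (by simp [hWdef])
    obtain ⟨X, hXfib, hXcard⟩ := Finset.exists_subset_card_eq hfib
    obtain ⟨Y, hYX, hYcard, j, hj⟩ := hφ w' X hXcard (fun Z => (f Z).castSucc)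
    have hYfib : ∀ y ∈ Y, y ∈ (Finset.Ioc m W).filter (fun x => ρ x = i) :=
      fun y hy => hXfib (hYX hy)
    refine ⟨Y, ?_, hYcard ▸ hw' W, ?_, ⟨i, ?_⟩⟩
    · intro y hy
      have := hYfib y hy
      simp only [Finset.mem_filter, Finset.mem_Ioc] at this
      exact ⟨this.1, Set.mem_univ _⟩
    · by_cases hZ : ∃ Z, Z ⊆ Y ∧ Z.card = 2
      · obtain ⟨Z₀, hZ₀, hZ₀c⟩ := hZ
        refine ⟨f Z₀, fun Z hZs hZc => ?_⟩
        have e1 := hj Z hZs hZc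
        have e2 := hj Z₀ hZ₀ hZ₀c
        exact Fin.castSucc_injective _ (e1.trans e2.symm)
      · exact ⟨⟨0, hk⟩, fun Z hZs hZc => absurd ⟨Z, hZs, hZc⟩ hZ⟩
    · intro y hy
      have := hYfib y hy
      simp only [Finset.mem_filter] at this
      exact this.2
end

section
/- Fix k ≥ 1, a coloring f : [ℕ]² → Fin k, and φ : ℕ → ℕ satisfying w → (φ(w))²_{k+1} for all w. With 'large' as defined relative to this instance, the union of two small (i.e., not large) subsets of ℕ is small. Consequently, if a large set L is partitioned into finitely many pieces L = L₁ ∪ ⋯ ∪ L_s, then at least one L_i is large. -/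
lemma large2_mono (k : ℕ) (f : Finset ℕ → Fin k) (φ : ℕ → ℕ) {A B : Set ℕ}
    (h : Large2 k f φ A) (hAB : A ⊆ B) : Large2 k f φ B := by
  intro m p
  obtain ⟨w, hw⟩ := h m p
  refine ⟨w, fun ρ => ?_⟩
  obtain ⟨Y, hY1, hY2, hY3, hY4⟩ := hw ρ
  exact ⟨Y, hY1.trans (Set.inter_subset_inter_right _ hAB), hY2, hY3, hY4⟩

lemma large2_union (k : ℕ) (f : Finset ℕ → Fin k) (φ : ℕ → ℕ) (S₁ S₂ : Set ℕ)
    (h1 : ¬ Large2 k f φ S₁) (h2 : ¬ Large2 k f φ S₂) :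
    ¬ Large2 k f φ (S₁ ∪ S₂) := by
  classical
  intro hU
  rw [Large2] at h1 h2
  push_neg at h1 h2
  obtain ⟨m₁, p₁, hS1⟩ := h1
  obtain ⟨m₂, p₂, hS2⟩ := h2
  obtain ⟨w, hw⟩ := hU (max m₁ m₂) (p₁ * (p₂ * 2))
  obtain ⟨ρ₁, hρ₁⟩ := hS1 w
  obtain ⟨ρ₂, hρ₂⟩ := hS2 w
  let e : Fin p₁ × Fin p₂ × Fin 2 ≃ Fin (p₁ * (p₂ * 2)) :=
    (Equiv.prodCongr (Equiv.refl _) finProdFinEquiv).trans finProdFinEquiv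
  let ind : ℕ → Fin 2 := fun x => if x ∈ S₁ then 0 else 1
  obtain ⟨Y, hY1, hY2, hY3, i, hi⟩ := hw (fun x => e (ρ₁ x, ρ₂ x, ind x))
  have hcomp : ∀ y ∈ Y, (ρ₁ y, ρ₂ y, ind y) = e.symm i := by
    intro y hy
    have h := hi y hy
    simpa using congrArg e.symm h
  have h1c : ∀ y ∈ Y, ρ₁ y = (e.symm i).1 :=
    fun y hy => congrArg Prod.fst (hcomp y hy)
  have h2c : ∀ y ∈ Y, ρ₂ y = (e.symm i).2.1 :=
    fun y hy => congrArg (fun q => q.2.1) (hcomp y hy)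
  have hbc : ∀ y ∈ Y, ind y = (e.symm i).2.2 :=
    fun y hy => congrArg (fun q => q.2.2) (hcomp y hy)
  by_cases hb : (e.symm i).2.2 = 0
  · -- everything in Y is in S₁
    have hmem : ∀ y ∈ Y, y ∈ S₁ := by
      intro y hy
      by_contra hyS
      have := hbc y hy
      simp only [ind, if_neg hyS, hb] at this
      exact one_ne_zero this
    have hsub : ↑Y ⊆ Set.Ioc m₁ w ∩ S₁ := by
      intro y hy
      have h := hY1 hy
      exact ⟨Set.Ioc_subset_Ioc (le_max_left _ _) le_rfl h.1, hmem y hy⟩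
    obtain ⟨y, hy, hne⟩ := hρ₁ Y hsub hY2 hY3 (e.symm i).1
    exact hne (h1c y hy)
  · -- everything in Y is in S₂
    have hmem : ∀ y ∈ Y, y ∈ S₂ := by
      intro y hy
      have h := hY1 hy
      rcases h.2 with h' | h'
      · exfalso
        have := hbc y hy
        simp only [ind, if_pos h'] at this
        exact hb this.symm
      · exact h'
    have hsub : ↑Y ⊆ Set.Ioc m₂ w ∩ S₂ := by
      intro y hy
      have h := hY1 hy
      exact ⟨Set.Ioc_subset_Ioc (le_max_right _ _) le_rfl h.1, hmem y hy⟩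
    obtain ⟨y, hy, hne⟩ := hρ₂ Y hsub hY2 hY3 (e.symm i).2.1
    exact hne (h2c y hy)

theorem stmt5 (k : ℕ) (hk : 1 ≤ k) (f : Finset ℕ → Fin k) (φ : ℕ → ℕ)
    (hφ : ∀ w, ArrowN 2 w (φ w) (k + 1)) :
    (∀ S₁ S₂ : Set ℕ, ¬ Large2 k f φ S₁ → ¬ Large2 k f φ S₂ →
      ¬ Large2 k f φ (S₁ ∪ S₂)) ∧
    (∀ (s : ℕ), 1 ≤ s → ∀ L : Fin s → Set ℕ,
      Large2 k f φ (⋃ i, L i) → ∃ i, Large2 k f φ (L i)) := by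
  refine ⟨large2_union k f φ, ?_⟩
  have hcase : ∀ A B : Set ℕ, Large2 k f φ (A ∪ B) →
      Large2 k f φ A ∨ Large2 k f φ B := by
    intro A B h
    by_contra hc
    push_neg at hc
    exact large2_union k f φ A B hc.1 hc.2 h
  intro s
  induction s with
  | zero => omega
  | succ n ih =>
    intro _ L hL
    rcases Nat.eq_zero_or_pos n with hn | hn
    · subst hn
      refine ⟨0, large2_mono k f φ hL ?_⟩
      exact Set.iUnion_subset fun i => by rw [Fin.eq_zero i]
    · have hsplit : (⋃ i, L i) ⊆ (⋃ j : Fin n, L j.castSucc) ∪ L (Fin.last n) := by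
        refine Set.iUnion_subset fun i => ?_
        rcases Fin.eq_castSucc_or_eq_last i with ⟨j, hj⟩ | hj
        · subst hj
          exact (Set.subset_iUnion (fun j : Fin n => L j.castSucc) j).trans
            Set.subset_union_left
        · subst hj
          exact Set.subset_union_right
      rcases hcase _ _ (large2_mono k f φ hL hsplit) with h | h
      · obtain ⟨j, hj⟩ := ih hn (fun j => L j.castSucc) h
        exact ⟨j.castSucc, hj⟩
      · exact ⟨Fin.last n, h⟩
end

section
/- Fix n ≥ 2, k ≥ 1, f : [ℕ]ⁿ → Fin k, and φ with w → (φ(w))ⁿ_{k+1} for all w and liminf φ = ∞. With largeness defined for subsets of [ℕ]^{n-1} relative to this instance, the union of any two small subsets of [ℕ]^{n-1} is small; hence any finite partition of a large subset of [ℕ]^{n-1} contains a large piece. -/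
/-- Largeness of `L ⊆ [ℕ]^{n-1}` relative to the instance `f, φ` of packed
Ramsey's theorem for exponent `n`.  The helper exponents `a_i` are the first
entries of the compositions of `n` of length `> 1`; here we index the helper
colorings directly by the compositions.  `L` is large if for every `m` and
every assignment of numbers of colors `p c` there is a `w` such that for all
colorings `ρ c : [{1,…,w}]^{(c.blocks).headI} → Fin (p c)` there is
`Y ⊆ (m,w]` with `[Y]^{n-1} ⊆ L`, `|Y| ≥ φ w`, `Y` homogeneous for `f` and for
each `ρ c` with `c` of length `> 1`. -/
def LargeN (n k : ℕ) (f : Finset ℕ → Fin k) (φ : ℕ → ℕ)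
    (L : Set (Finset ℕ)) : Prop :=
  ∀ (m : ℕ) (p : Composition n → ℕ), ∃ w : ℕ,
    ∀ ρ : (c : Composition n) → Finset ℕ → Fin (p c),
      ∃ Y : Finset ℕ, ↑Y ⊆ Set.Ioc m w ∧
        (∀ Z ⊆ Y, Z.card = n - 1 → Z ∈ L) ∧
        φ w ≤ Y.card ∧
        (∃ i : Fin k, ∀ Z ⊆ Y, Z.card = n → f Z = i) ∧
        (∀ c : Composition n, 1 < c.length →
          ∃ i : Fin (p c), ∀ Z ⊆ Y, Z.card = c.blocks.headI → ρ c Z = i)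

/-- The composition `(n-1, 1)` of `n`, for `n ≥ 2`. -/
def comp₀ (n : ℕ) (hn : 2 ≤ n) : Composition n :=
  ⟨[n - 1, 1], by intro i hi; simp at hi; rcases hi with h | h <;> omega,
    by simp; omega⟩

lemma comp₀_length (n : ℕ) (hn : 2 ≤ n) : 1 < (comp₀ n hn).length := by
  simp [comp₀, Composition.length]

lemma comp₀_headI (n : ℕ) (hn : 2 ≤ n) : (comp₀ n hn).blocks.headI = n - 1 := rfl

lemma triple_eq {a b c : ℕ} (x : Fin a) (y : Fin b) (z : Fin c)
    (i : Fin (a * b * c))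
    (h : finProdFinEquiv (finProdFinEquiv (x, y), z) = i) :
    x = (finProdFinEquiv.symm ((finProdFinEquiv.symm i).1)).1 ∧
    y = (finProdFinEquiv.symm ((finProdFinEquiv.symm i).1)).2 ∧
    z = (finProdFinEquiv.symm i).2 := by
  subst h; simp

lemma largeN_mono {n k : ℕ} {f : Finset ℕ → Fin k} {φ : ℕ → ℕ}
    {L L' : Set (Finset ℕ)} (h : L ⊆ L') (hl : LargeN n k f φ L) :
    LargeN n k f φ L' := by
  intro m p
  obtain ⟨w, hw⟩ := hl m p
  refine ⟨w, fun ρ => ?_⟩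
  obtain ⟨Y, h1, h2, h3⟩ := hw ρ
  exact ⟨Y, h1, fun Z hZ hc => h (h2 Z hZ hc), h3⟩

lemma union_small {n k : ℕ} (hn : 2 ≤ n) {f : Finset ℕ → Fin k} {φ : ℕ → ℕ}
    {S₁ S₂ : Set (Finset ℕ)}
    (h1 : ¬ LargeN n k f φ S₁) (h2 : ¬ LargeN n k f φ S₂) :
    ¬ LargeN n k f φ (S₁ ∪ S₂) := by
  classical
  intro hL
  rw [LargeN] at h1 h2
  push_neg at h1 h2
  obtain ⟨m₁, p₁, h1⟩ := h1
  obtain ⟨m₂, p₂, h2⟩ := h2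
  obtain ⟨w, hw⟩ := hL (max m₁ m₂) (fun c => p₁ c * p₂ c * 2)
  obtain ⟨ρ₁, h1w⟩ := h1 w
  obtain ⟨ρ₂, h2w⟩ := h2 w
  set ρ : (c : Composition n) → Finset ℕ → Fin (p₁ c * p₂ c * 2) :=
    fun c Z => finProdFinEquiv (finProdFinEquiv (ρ₁ c Z, ρ₂ c Z),
      if Z ∈ S₁ then (0 : Fin 2) else 1) with hρ
  obtain ⟨Y, hY1, hY2, hY3, hY4, hY5⟩ := hw ρ
  -- projections are homogeneous
  have hhom1 : ∀ c : Composition n, 1 < c.length →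
      ∃ i : Fin (p₁ c), ∀ Z ⊆ Y, Z.card = c.blocks.headI → ρ₁ c Z = i := by
    intro c hc
    obtain ⟨i, hi⟩ := hY5 c hc
    exact ⟨(finProdFinEquiv.symm ((finProdFinEquiv.symm i).1)).1,
      fun Z hZ hcard => (triple_eq _ _ _ _ (hi Z hZ hcard)).1⟩
  have hhom2 : ∀ c : Composition n, 1 < c.length →
      ∃ i : Fin (p₂ c), ∀ Z ⊆ Y, Z.card = c.blocks.headI → ρ₂ c Z = i := by
    intro c hc
    obtain ⟨i, hi⟩ := hY5 c hc
    exact ⟨(finProdFinEquiv.symm ((finProdFinEquiv.symm i).1)).2,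
      fun Z hZ hcard => (triple_eq _ _ _ _ (hi Z hZ hcard)).2.1⟩
  -- the 2-coloring at comp₀ is homogeneous
  obtain ⟨i0, hi0⟩ := hY5 (comp₀ n hn) (comp₀_length n hn)
  have hbit : ∀ Z ⊆ Y, Z.card = n - 1 →
      (if Z ∈ S₁ then (0 : Fin 2) else 1) = (finProdFinEquiv.symm i0).2 := by
    intro Z hZ hcard
    exact (triple_eq _ _ _ _ (hi0 Z hZ (by rw [comp₀_headI]; exact hcard))).2.2
  have hYm₁ : ↑Y ⊆ Set.Ioc m₁ w := fun x hx =>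
    ⟨lt_of_le_of_lt (le_max_left m₁ m₂) (hY1 hx).1, (hY1 hx).2⟩
  have hYm₂ : ↑Y ⊆ Set.Ioc m₂ w := fun x hx =>
    ⟨lt_of_le_of_lt (le_max_right m₁ m₂) (hY1 hx).1, (hY1 hx).2⟩
  by_cases hb : (finProdFinEquiv.symm i0).2 = 0
  · -- all (n-1)-subsets of Y are in S₁
    have hS1 : ∀ Z ⊆ Y, Z.card = n - 1 → Z ∈ S₁ := by
      intro Z hZ hcard
      have := hbit Z hZ hcard
      rw [hb] at this
      by_contra hZS
      simp [hZS] at this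
    obtain ⟨c, hc, hbad⟩ := h1w Y hYm₁ hS1 hY3 hY4
    obtain ⟨i, hi⟩ := hhom1 c hc
    obtain ⟨Z, hZ, hcard, hne⟩ := hbad i
    exact hne (hi Z hZ hcard)
  · have hS2 : ∀ Z ⊆ Y, Z.card = n - 1 → Z ∈ S₂ := by
      intro Z hZ hcard
      have := hbit Z hZ hcard
      rcases hY2 Z hZ hcard with hZS | hZS
      · simp [hZS] at this; exact absurd this.symm hb
      · exact hZS
    obtain ⟨c, hc, hbad⟩ := h2w Y hYm₂ hS2 hY3 hY4
    obtain ⟨i, hi⟩ := hhom2 c hc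
    obtain ⟨Z, hZ, hcard, hne⟩ := hbad i
    exact hne (hi Z hZ hcard)

theorem stmt8 (n k : ℕ) (hn : 2 ≤ n) (hk : 1 ≤ k)
    (f : Finset ℕ → Fin k) (φ : ℕ → ℕ)
    (hφ : ∀ w, ArrowN n w (φ w) (k + 1))
    (hlim : Filter.Tendsto φ Filter.atTop Filter.atTop) :
    (∀ S₁ S₂ : Set (Finset ℕ), ¬ LargeN n k f φ S₁ → ¬ LargeN n k f φ S₂ →
      ¬ LargeN n k f φ (S₁ ∪ S₂)) ∧
    (∀ (s : ℕ), 1 ≤ s → ∀ L : Fin s → Set (Finset ℕ),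
      LargeN n k f φ (⋃ i, L i) → ∃ i, LargeN n k f φ (L i)) := by
  constructor
  · exact fun S₁ S₂ h1 h2 => union_small hn h1 h2
  · intro s hs
    induction s with
    | zero => omega
    | succ t ih =>
      intro L hL
      by_contra hcon
      push_neg at hcon
      rcases Nat.eq_zero_or_pos t with rfl | ht
      · exact hcon 0 (largeN_mono (by
          intro x hx
          simp only [Set.mem_iUnion] at hx
          obtain ⟨i, hi⟩ := hx
          rwa [Fin.fin_one_eq_zero i] at hi) hL)
      · have hsplit : (⋃ i, L i) ⊆
            (⋃ i : Fin t, L i.castSucc) ∪ L (Fin.last t) := by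
          intro x hx
          simp only [Set.mem_iUnion] at hx
          obtain ⟨i, hi⟩ := hx
          induction i using Fin.lastCases with
          | last => exact Or.inr hi
          | cast j => exact Or.inl (Set.mem_iUnion.mpr ⟨j, hi⟩)
        have hsmall1 : ¬ LargeN n k f φ (⋃ i : Fin t, L i.castSucc) := by
          intro h
          obtain ⟨i, hi⟩ := ih ht _ h
          exact hcon _ hi
        have hsmall2 : ¬ LargeN n k f φ (L (Fin.last t)) := hcon _
        exact union_small hn hsmall1 hsmall2 (largeN_mono hsplit hL)
end

section
/- Fix n ≥ 2, k ≥ 1, f : [ℕ]ⁿ → Fin k, and φ with w → (φ(w))ⁿ_{k+1} for all w and liminf φ = ∞. If L ⊆ [ℕ]^{n-1} is large, p ≤ n-1, and h : [ℕ]^p → Fin s is any coloring, then the set {Z ∈ L : h is constant on [Z]^p} is large. -/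
theorem stmt9 (n k : ℕ) (hn : 2 ≤ n) (hk : 1 ≤ k)
    (f : Finset ℕ → Fin k) (φ : ℕ → ℕ)
    (hφ : ∀ w, ArrowN n w (φ w) (k + 1))
    (hlim : Filter.Tendsto φ Filter.atTop Filter.atTop)
    (L : Set (Finset ℕ)) (hL : LargeN n k f φ L)
    (p : ℕ) (hp : p ≤ n - 1) (s : ℕ) (h : Finset ℕ → Fin s) :
    LargeN n k f φ
      {Z : Finset ℕ | Z ∈ L ∧ ∃ i : Fin s, ∀ D ⊆ Z, D.card = p → h D = i} := by
  rcases Nat.eq_zero_or_pos s with hs | hs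
  · subst hs; exact absurd (h ∅).isLt (by omega)
  rcases Nat.eq_zero_or_pos p with hp0 | hp0
  · subst hp0
    intro m pc
    obtain ⟨w, hw⟩ := hL m pc
    refine ⟨w, fun ρ => ?_⟩
    obtain ⟨Y, h1, h2, h3, h4, h5⟩ := hw ρ
    exact ⟨Y, h1, fun Z hZ hc => ⟨h2 Z hZ hc, h ∅, fun D _ hDc => by
      rw [Finset.card_eq_zero.mp hDc]⟩, h3, h4, h5⟩
  · have hpn : p + (n - p) = n := by omega
    let c₀ : Composition n := ⟨[p, n - p], by
      intro i hi; simp at hi; omega, by simp [hpn]⟩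
    intro m pc
    obtain ⟨w, hw⟩ := hL m (fun c => pc c * s)
    refine ⟨w, fun ρ => ?_⟩
    obtain ⟨Y, h1, h2, h3, h4, h5⟩ := hw (fun c Z => finProdFinEquiv (ρ c Z, h Z))
    obtain ⟨j, hj⟩ := h5 c₀ (by simp [c₀, Composition.length])
    refine ⟨Y, h1, ?_, h3, h4, ?_⟩
    · intro Z hZ hc
      refine ⟨h2 Z hZ hc, (finProdFinEquiv.symm j).2, fun D hD hDc => ?_⟩
      have h6 := hj D (hD.trans hZ) (by simpa [c₀] using hDc)
      have h7 : (ρ c₀ D, h D) = finProdFinEquiv.symm j := by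
        rw [Equiv.eq_symm_apply]; exact h6
      exact congrArg Prod.snd h7
    · intro c hc
      obtain ⟨j', hj'⟩ := h5 c hc
      refine ⟨(finProdFinEquiv.symm j').1, fun Z hZ hZc => ?_⟩
      have h6 := hj' Z hZ hZc
      have h7 : (ρ c Z, h Z) = finProdFinEquiv.symm j' := by
        rw [Equiv.eq_symm_apply]; exact h6
      exact congrArg Prod.fst h7
end

section
/- Fix n ≥ 2, k ≥ 1, a coloring f : [ℕ]ⁿ → Fin k, an order function φ with w → (φ(w))ⁿ_{k+1} for all w, and let g : [ℕ]ⁿ → S be the partition-type coloring with all-colors-on-packed-sets property. Define h(Z) = f(Z) if g(Z) = (1,…,1), and h(Z) = g(Z) otherwise (viewing the codomain as the disjoint union (S ∖ {(1,…,1)}) ⊔ Fin k). If A is semi-homogeneous for h (at most 2^{n-1} colors on [A]ⁿ) and packed for φ, then there is a unique color ĉ ∈ Fin k such that f(X) = ĉ for every X ∈ [A]ⁿ with g(X) = (1,…,1). -/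
theorem stmt13 (n k : ℕ) (hn : 2 ≤ n) (hk : 1 ≤ k)
    (f : Finset ℕ → Fin k) (φ : ℕ → ℕ)
    (hmono : Monotone φ) (hunb : ∀ b, ∃ v, b ≤ φ v)
    (harrow : ∀ w, ArrowN n w (φ w) (k + 1))
    -- the partition-type coloring `g`, assigning all `2^(n-1)` types on any packed set
    (g : Finset ℕ → Composition n)
    (hg : ∀ A : Set ℕ, Packed φ A → ∀ c : Composition n,
      ∃ X : Finset ℕ, ↑X ⊆ A ∧ X.card = n ∧ g X = c)
    -- the combined coloring `h` into `(S ∖ {(1,…,1)}) ⊔ Fin k`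
    (h : Finset ℕ → (Composition n ⊕ Fin k))
    (hh : ∀ Z : Finset ℕ, Z.card = n →
      (g Z = Composition.ones n → h Z = Sum.inr (f Z)) ∧
      (g Z ≠ Composition.ones n → h Z = Sum.inl (g Z)))
    (A : Set ℕ) (hA : Packed φ A)
    -- `A` is semi-homogeneous for `h`: at most `2^(n-1)` colors on `[A]ⁿ`
    (hsemi : Set.ncard {c : Composition n ⊕ Fin k |
      ∃ Z : Finset ℕ, ↑Z ⊆ A ∧ Z.card = n ∧ h Z = c} ≤ 2 ^ (n - 1)) :
    ∃! chat : Fin k, ∀ X : Finset ℕ, ↑X ⊆ A → X.card = n →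
      g X = Composition.ones n → f X = chat := by
  classical
  obtain ⟨X0, hX0A, hX0card, hX0g⟩ := hg A hA (Composition.ones n)
  have key : ∀ X Y : Finset ℕ, ↑X ⊆ A → X.card = n → g X = Composition.ones n →
      ↑Y ⊆ A → Y.card = n → g Y = Composition.ones n → f X = f Y := by
    intro X Y hXA hXc hXg hYA hYc hYg
    by_contra hne
    set C : Set (Composition n ⊕ Fin k) :=
      {c | ∃ Z : Finset ℕ, ↑Z ⊆ A ∧ Z.card = n ∧ h Z = c} with hC
    have hsub : (Sum.inl '' ({c | c ≠ Composition.ones n} : Set (Composition n)))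
        ∪ {Sum.inr (f X), Sum.inr (f Y)} ⊆ C := by
      rintro c (⟨d, hd, rfl⟩ | hc)
      · obtain ⟨Z, hZA, hZc, hZg⟩ := hg A hA d
        exact ⟨Z, hZA, hZc, by rw [(hh Z hZc).2 (hZg ▸ hd), hZg]⟩
      · rcases hc with rfl | rfl
        · exact ⟨X, hXA, hXc, (hh X hXc).1 hXg⟩
        · exact ⟨Y, hYA, hYc, (hh Y hYc).1 hYg⟩
    have hdisj : Disjoint (Sum.inl '' ({c | c ≠ Composition.ones n} : Set (Composition n)))
        ({Sum.inr (f X), Sum.inr (f Y)} : Set (Composition n ⊕ Fin k)) := by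
      rw [Set.disjoint_left]
      rintro c ⟨d, hd, rfl⟩ (h | h) <;> simp_all
    have h1 : ((Sum.inl '' ({c | c ≠ Composition.ones n} : Set (Composition n))) :
        Set (Composition n ⊕ Fin k)).ncard = 2 ^ (n - 1) - 1 := by
      rw [Set.ncard_image_of_injective _ Sum.inl_injective]
      have he : ({c | c ≠ Composition.ones n} : Set (Composition n))
          = Set.univ \ {Composition.ones n} := by ext; simp
      rw [he, Set.ncard_diff (by simp), Set.ncard_univ, Set.ncard_singleton,
        Nat.card_eq_fintype_card, composition_card]
    have h2 : ({Sum.inr (f X), Sum.inr (f Y)} : Set (Composition n ⊕ Fin k)).ncard = 2 :=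
      Set.ncard_pair (by simpa using hne)
    have hle := Set.ncard_le_ncard hsub (Set.toFinite C)
    rw [Set.ncard_union_eq hdisj (Set.toFinite _) (Set.toFinite _), h1, h2] at hle
    have hpow : 1 ≤ 2 ^ (n - 1) := Nat.one_le_two_pow
    omega
  refine ⟨f X0, ?_, ?_⟩
  · intro X hXA hXc hXg
    exact key X X0 hXA hXc hXg hX0A hX0card hX0g
  · intro c hc
    exact (hc X0 hX0A hX0card hX0g).symm
end

section
/- Let k ≥ 1, φ : ℕ → ℕ non-decreasing and unbounded with w → (φ(w))¹_{k+1} for all w, and f : ℕ → Fin k. Suppose (w_i) is defined by w₀ = 1 and w_{i+1} = the least w > w_i with (w - w_i) → (φ(w))¹_k. Then for each i there exists Y_i ⊆ (w_i, w_{i+1}] with |Y_i| ≥ φ(w_{i+1}) on which f is constant; moreover, if H ⊆ ℕ is infinite and the induced coloring i ↦ (the f-value on Y_i) is constant on H, then A = ⋃_{i∈H} Y_i is homogeneous for f and satisfies |A ∩ {1,…,w_i}| ≥ φ(w_i) for all i ∈ H. -/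
theorem stmt18 (k : ℕ) (hk : 1 ≤ k) (φ : ℕ → ℕ)
    (hmono : Monotone φ) (hunb : ∀ b, ∃ v, b ≤ φ v)
    (harrow : ∀ w, Arrow1 w (φ w) (k + 1))
    (f : ℕ → Fin k)
    (w : ℕ → ℕ) (hw0 : w 0 = 1)
    -- `w (i+1)` is the least `w' > w i` with `(w' - w i) → (φ w')¹_k`
    (hwstep : ∀ i, w i < w (i + 1) ∧ Arrow1 (w (i + 1) - w i) (φ (w (i + 1))) k ∧
      ∀ v, w i < v → v < w (i + 1) → ¬ Arrow1 (v - w i) (φ v) k) :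
    -- (1) in each interval `(w i, w (i+1)]` there is an `f`-monochromatic
    --     set of size at least `φ (w (i+1))`
    (∀ i : ℕ, ∃ Y : Finset ℕ, ↑Y ⊆ Set.Ioc (w i) (w (i + 1)) ∧
      φ (w (i + 1)) ≤ Y.card ∧ ∃ c : Fin k, ∀ y ∈ Y, f y = c) ∧
    -- (2) given any such blocks `Y i` and any infinite `H` on which the
    --     induced coloring is constant, `A = ⋃_{i ∈ H} Y i` is homogeneous
    --     for `f` and `|A ∩ {1,…,w (i+1)}| ≥ φ (w (i+1))` for all `i ∈ H`
    (∀ Y : ℕ → Finset ℕ,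
      (∀ i, ↑(Y i) ⊆ Set.Ioc (w i) (w (i + 1)) ∧ φ (w (i + 1)) ≤ (Y i).card) →
      ∀ H : Set ℕ, H.Infinite →
      ∀ c : Fin k, (∀ i ∈ H, ∀ y ∈ Y i, f y = c) →
        (∀ a ∈ ⋃ i ∈ H, ((Y i : Set ℕ)), f a = c) ∧
        ∀ i ∈ H, φ (w (i + 1)) ≤
          ((⋃ j ∈ H, ((Y j : Set ℕ))) ∩ Set.Icc 1 (w (i + 1))).ncard) := by
  constructor
  · intro i
    obtain ⟨hlt, harr, -⟩ := hwstep i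
    obtain ⟨Yi, hsub, hcard, c, hc⟩ := harr (Finset.Ioc (w i) (w (i + 1)))
      (by rw [Nat.card_Ioc]) f
    exact ⟨Yi, by simpa using (Finset.coe_subset.2 hsub).trans (by simp),
      hcard.ge, c, hc⟩
  · intro Y hY H hH c hc
    refine ⟨?_, ?_⟩
    · intro a ha
      simp only [Set.mem_iUnion] at ha
      obtain ⟨i, hi, hai⟩ := ha
      exact hc i hi a hai
    · intro i hi
      have h1 : (Y i : Set ℕ) ⊆ (⋃ j ∈ H, ((Y j : Set ℕ))) ∩ Set.Icc 1 (w (i + 1)) := by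
        intro a ha
        refine ⟨Set.mem_biUnion hi ha, ?_⟩
        have := (hY i).1 ha
        exact ⟨Nat.succ_le_of_lt (Nat.lt_of_le_of_lt (Nat.zero_le _) this.1), this.2⟩
      have hfin : ((⋃ j ∈ H, ((Y j : Set ℕ))) ∩ Set.Icc 1 (w (i + 1))).Finite :=
        (Set.finite_Icc 1 (w (i + 1))).subset (Set.inter_subset_right)
      calc φ (w (i + 1)) ≤ (Y i).card := (hY i).2
        _ = (Y i : Set ℕ).ncard := (Set.ncard_coe_finset _).symm
        _ ≤ _ := Set.ncard_le_ncard h1 hfin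
end
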